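/- For m ≥ n+2, the map Hom(∂Δ^m, X) → Hom(∂Δ^m, Y) ×_{Hom(Λ^m_0, Y)} Hom(Λ^m_0, X) induced by Λ^m_0 ⊂ ∂Δ^m has a retraction when f : X → Y is a relative n-dimensional hypergroupoid, using that Λ^m_0 → ∂Δ^m is the pushout of ∂Δ^{m-1} → Δ^{m-1} along the 0-th face inclusion ∂Δ^{m-1} → Λ^m_0. -/

import Mathlib

open CategoryTheory Simplicial

def RelTarget {X Y A B : SSet} (f : X ⟶ Y) (i : A ⟶ B) : Type _ :=
  {p : (A ⟶ X) × (B ⟶ Y) // p.1 ≫ f = i ≫ p.2}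

def relMatch {X Y A B : SSet} (f : X ⟶ Y) (i : A ⟶ B) (g : B ⟶ X) : RelTarget f i :=
  ⟨(i ≫ g, g ≫ f), Category.assoc i g f⟩

/-- A relative `n`-dimensional hypergroupoid: a Kan fibration whose relative partial
matching maps are bijective in all levels `m > n`. -/
def IsRelHypergroupoid (n : ℕ) {X Y : SSet} (f : X ⟶ Y) : Prop :=
  (∀ (m : ℕ) (k : Fin (m + 1)),
      Function.Surjective (relMatch f (Λ[m, k].ι))) ∧
    ∀ (m : ℕ) (k : Fin (m + 1)), m > n →
      Function.Bijective (relMatch f (Λ[m, k].ι))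

/-- The inclusion `Λ[m, k] ⟶ ∂Δ[m]` of a horn into the boundary of the standard
simplex. -/
def hornToBoundary (m : ℕ) (k : Fin (m + 1)) : (Λ[m, k] : SSet) ⟶ ∂Δ[m] :=
  SSet.Subcomplex.homOfLE (fun j x hx hs => hx (by
    rw [Set.range_eq_univ.mpr hs, Set.univ_union]))

namespace Stmt7Aux

open SimplexCategory SSet Opposite

/-- The `0`-th face of `Δ[m'+1]`, as a simplex of the boundary. -/
def sigma (m' : ℕ) : (∂Δ[m' + 1] : SSet).obj (op ⦋m'⦌) :=
  ⟨stdSimplex.objEquiv.symm (δ (0 : Fin (m' + 2))), by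
    intro h
    obtain ⟨t, ht⟩ := h 0
    exact Fin.succ_ne_zero t ht⟩

lemma map_sigma (m' : ℕ) {j : SimplexCategoryᵒᵖ} (ψ : j.unop ⟶ ⦋m'⦌) :
    Δ[m' + 1].map ψ.op (sigma m').1 = stdSimplex.objEquiv.symm (ψ ≫ δ 0) := by
  rw [stdSimplex.map_apply]
  simp [sigma]

/-- The map `Λ[m', 0] ⟶ Λ[m'+1, 0]` induced by the `0`-th face map. -/
def hornSigma (m' : ℕ) : (Λ[m', 0] : SSet) ⟶ Λ[m' + 1, 0] where
  app j := ↾fun z => ⟨stdSimplex.objEquiv.symm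
      ((stdSimplex.objEquiv z.1) ≫ δ 0), by
    obtain ⟨i, hi⟩ := Set.ne_univ_iff_exists_notMem _ |>.mp z.2
    simp only [Set.mem_union, Set.mem_range, Set.mem_singleton_iff, not_or, not_exists] at hi
    apply Set.ne_univ_iff_exists_notMem _ |>.mpr
    refine ⟨i.succ, ?_⟩
    simp only [Set.mem_union, Set.mem_range, Set.mem_singleton_iff, not_or, not_exists]
    constructor
    · intro t ht
      have h2 : Fin.succAbove 0 (stdSimplex.asOrderHom z.1 t) = i.succ := ht
      rw [Fin.zero_succAbove] at h2
      exact hi.1 t (Fin.succ_injective _ h2)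
    · exact Fin.succ_ne_zero i⟩
  naturality j j' φ := by
    ext z
    apply Subtype.ext
    show _ = Δ[m' + 1].map φ _
    apply stdSimplex.objEquiv.injective
    rw [stdSimplex.map_apply]
    simp only [Equiv.apply_symm_apply]
    show stdSimplex.objEquiv (Δ[m'].map φ z.1) ≫ δ 0 = _
    rw [stdSimplex.map_apply]
    simp only [Equiv.apply_symm_apply, Category.assoc]
    rfl

lemma hornSigma_compat (m' : ℕ) {X : SSet} (g : (∂Δ[m' + 1] : SSet) ⟶ X) :
    Λ[m', 0].ι ≫ SSet.yonedaEquiv.symm (g.app (op ⦋m'⦌) (sigma m'))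
      = hornSigma m' ≫ hornToBoundary (m' + 1) 0 ≫ g := by
  ext j z
  show X.map (stdSimplex.objEquiv z.1).op (g.app (op ⦋m'⦌) (sigma m')) = _
  rw [← FunctorToTypes.naturality]
  congr 1

lemma yoneda_symm_comp {X Y : SSet} (f : X ⟶ Y) (n : SimplexCategory) (x : X.obj (op n)) :
    SSet.yonedaEquiv.symm x ≫ f = SSet.yonedaEquiv.symm (f.app (op n) x) := by
  exact SSet.yonedaEquiv_symm_comp x f

lemma relMatch_inj (n : ℕ) {X Y : SSet} (f : X ⟶ Y) (hf : IsRelHypergroupoid n f)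
    (m' : ℕ) (hm : m' + 1 ≥ n + 2) :
    Function.Injective (relMatch f (hornToBoundary (m' + 1) 0)) := by
  intro g g' h
  have h1 : hornToBoundary (m' + 1) 0 ≫ g = hornToBoundary (m' + 1) 0 ≫ g' :=
    congrArg (fun p => p.1.1) h
  have h2 : g ≫ f = g' ≫ f := congrArg (fun p => p.1.2) h
  -- the key equality at the 0-th face
  have hkey : g.app (op ⦋m'⦌) (sigma m') = g'.app (op ⦋m'⦌) (sigma m') := by
    have hbij := (hf.2 m' 0 (by omega)).1
    have heq : relMatch f (Λ[m', 0].ι)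
          (SSet.yonedaEquiv.symm (g.app (op ⦋m'⦌) (sigma m')))
        = relMatch f (Λ[m', 0].ι)
          (SSet.yonedaEquiv.symm (g'.app (op ⦋m'⦌) (sigma m'))) := by
      apply Subtype.ext
      apply Prod.ext
      · show Λ[m', 0].ι ≫ _ = Λ[m', 0].ι ≫ _
        rw [hornSigma_compat, hornSigma_compat, h1]
      · show SSet.yonedaEquiv.symm _ ≫ f = SSet.yonedaEquiv.symm _ ≫ f
        rw [yoneda_symm_comp, yoneda_symm_comp]
        congr 1
        calc f.app (op ⦋m'⦌) (g.app (op ⦋m'⦌) (sigma m'))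
            = (g ≫ f).app (op ⦋m'⦌) (sigma m') := rfl
          _ = (g' ≫ f).app (op ⦋m'⦌) (sigma m') := by rw [h2]
          _ = _ := rfl
    have := hbij heq
    exact SSet.yonedaEquiv.symm.injective this
  ext j x
  show g.app j x = g'.app j x
  by_cases hc : Set.range (stdSimplex.asOrderHom x.1) ∪ {0} ≠ Set.univ
  · -- the simplex lies in the horn
    have : x = (hornToBoundary (m' + 1) 0).app j ⟨x.1, hc⟩ := Subtype.ext rfl
    rw [this]
    exact congrArg (fun φ => φ.app j ⟨x.1, hc⟩) h1
  · -- the simplex factors through the 0-th face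
    push_neg at hc
    have h0 : ∀ t, stdSimplex.asOrderHom x.1 t ≠ 0 := by
      intro t ht
      apply x.2
      have hsub : ({0} : Set (Fin (m' + 2))) ⊆ Set.range (stdSimplex.asOrderHom x.1) :=
        Set.singleton_subset_iff.mpr ⟨t, ht⟩
      rw [← Set.range_eq_univ, ← hc, Set.union_eq_self_of_subset_right hsub]
    let ψ : j.unop ⟶ ⦋m'⦌ := Hom.mk
      ⟨fun t => (stdSimplex.asOrderHom x.1 t).pred (h0 t), by
        intro a b hab
        simp only [Fin.le_def, Fin.coe_pred]
        exact Nat.sub_le_sub_right ((stdSimplex.asOrderHom x.1).monotone hab) 1⟩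
    have hx : x = (∂Δ[m' + 1] : SSet).map ψ.op (sigma m') := by
      apply Subtype.ext
      show x.1 = Δ[m' + 1].map ψ.op (sigma m').1
      rw [map_sigma]
      have : x.1 = stdSimplex.objEquiv.symm (stdSimplex.objEquiv x.1) :=
        (stdSimplex.objEquiv.symm_apply_apply x.1).symm
      rw [this]
      congr 1
      apply SimplexCategory.Hom.ext
      apply OrderHom.ext
      funext t
      show stdSimplex.asOrderHom x.1 t = Fin.succAbove 0 ((stdSimplex.asOrderHom x.1 t).pred (h0 t))
      rw [Fin.zero_succAbove, Fin.succ_pred]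
    rw [hx, FunctorToTypes.naturality, FunctorToTypes.naturality, hkey]

/-- A vertex of `Λ[m'+1, 0]` (for `m' ≥ 1`). -/
def vert (m' : ℕ) (hm : 1 ≤ m') : (Λ[m' + 1, 0] : SSet).obj (op ⦋0⦌) :=
  ⟨stdSimplex.const (m' + 1) 1 _, by
    apply Set.ne_univ_iff_exists_notMem _ |>.mpr
    refine ⟨⟨2, by omega⟩, ?_⟩
    simp only [Set.mem_union, Set.mem_range, Set.mem_singleton_iff, not_or, not_exists]
    constructor
    · intro t ht
      have h2 : (1 : Fin (m' + 2)).val = 2 := congrArg Fin.val ht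
      rw [Fin.val_one] at h2
      omega
    · intro ht
      have h2 : (2 : ℕ) = 0 := congrArg Fin.val ht
      omega⟩

/-- The constant map at a `0`-simplex. -/
def constMap {X : SSet} (x0 : X.obj (op ⦋0⦌)) (B : SSet) : B ⟶ X where
  app j := ↾fun _ => X.map (SimplexCategory.const j.unop ⦋0⦌ 0).op x0
  naturality j j' φ := by
    ext s
    show X.map ((unop j').const ⦋0⦌ 0).op x0 = X.map φ (X.map ((unop j).const ⦋0⦌ 0).op x0)
    rw [← FunctorToTypes.map_comp_apply]
    congr 1

end Stmt7Aux

/-- For `m ≥ n + 2` and `f : X → Y` a relative `n`-dimensional hypergroupoid, the map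
`Hom(∂Δ^m, X) → Hom(∂Δ^m, Y) ×_{Hom(Λ^m_0, Y)} Hom(Λ^m_0, X)` induced by the inclusion
`Λ^m_0 ⊆ ∂Δ^m` has a retraction. -/
theorem stmt7 (n : ℕ) {X Y : SSet} (f : X ⟶ Y) (hf : IsRelHypergroupoid n f)
    (m : ℕ) (hm : m ≥ n + 2) :
    ∃ r : RelTarget f (hornToBoundary m 0) → ((∂Δ[m] : SSet) ⟶ X),
      Function.LeftInverse r (relMatch f (hornToBoundary m 0)) := by
  obtain ⟨m', rfl⟩ : ∃ m', m = m' + 1 := ⟨m - 1, by omega⟩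
  have hinj := Stmt7Aux.relMatch_inj n f hf m' hm
  classical
  refine ⟨fun p => if h : ∃ g, relMatch f (hornToBoundary (m' + 1) 0) g = p then h.choose
      else Stmt7Aux.constMap (p.1.1.app (Opposite.op ⦋0⦌) (Stmt7Aux.vert m' (by omega))) _,
    fun g => ?_⟩
  have hex : ∃ g', relMatch f (hornToBoundary (m' + 1) 0) g'
      = relMatch f (hornToBoundary (m' + 1) 0) g := ⟨g, rfl⟩
  dsimp only
  rw [dif_pos hex]
  exact hinj hex.choose_spec
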